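/- Let p ∈ [1,∞], B > 0, ω ∈ ℝ and f ∈ PW_B^p. Then the function x ↦ |𝒢f(x,ω)|² belongs to PW_{2B}^q, where q ∈ [1,∞] satisfies 1 + 1/q = 2/p. -/

import Mathlib

open MeasureTheory Complex Real

/-- Membership in the Paley–Wiener space `PW_B^p`: `f = ℱF` for some
`F ∈ L^p([-B,B])` extended by zero to `ℝ`. -/
def PW (B : ℝ) (p : ENNReal) (f : ℝ → ℂ) : Prop :=
  ∃ F : ℝ → ℂ,
    MemLp F p (volume.restrict (Set.Icc (-B) B)) ∧
    (∀ t ∉ Set.Icc (-B) B, F t = 0) ∧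
    ∀ x : ℝ, f x = ∫ t : ℝ, F t * Complex.exp (-2*(π:ℂ)*Complex.I*(t:ℂ)*(x:ℂ))

/-- The Gabor transform `𝒢f(x,ω) = 2^{1/4} ∫ f(t) e^{-π(t-x)²} e^{-2πitω} dt`. -/
noncomputable def gabor (f : ℝ → ℂ) (x ω : ℝ) : ℂ :=
  (((2:ℝ)^((1:ℝ)/4) : ℝ) : ℂ) *
    ∫ t : ℝ, f t * Complex.exp (-(π:ℂ)*((t:ℂ)-(x:ℂ))^2) *
      Complex.exp (-2*(π:ℂ)*Complex.I*(t:ℂ)*(ω:ℂ))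

noncomputable section

open scoped ENNReal ComplexConjugate FourierTransform

namespace Stmt9Aux

/-- The modulation character. -/
def em (t x : ℝ) : ℂ := Complex.exp (-2*(π:ℂ)*Complex.I*(t:ℂ)*(x:ℂ))

lemma em_eq_exp_mul_I (t x : ℝ) : em t x = Complex.exp ((((-2)*π*t*x : ℝ) : ℂ) * Complex.I) := by
  unfold em; congr 1; push_cast; ring

lemma norm_em (t x : ℝ) : ‖em t x‖ = 1 := by
  rw [em_eq_exp_mul_I, Complex.norm_exp_ofReal_mul_I]

lemma em_add_left (s u x : ℝ) : em (s + u) x = em s x * em u x := by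
  unfold em; rw [← Complex.exp_add]; congr 1; push_cast; ring

lemma em_add_right (t s u : ℝ) : em t (s + u) = em t s * em t u := by
  unfold em; rw [← Complex.exp_add]; congr 1; push_cast; ring

lemma em_comm (t x : ℝ) : em t x = em x t := by
  unfold em; congr 1; ring

lemma conj_em (t x : ℝ) : conj (em t x) = em (-t) x := by
  unfold em
  rw [← Complex.exp_conj]
  congr 1
  simp only [map_mul, map_neg, map_ofNat, Complex.conj_I, Complex.conj_ofReal]
  push_cast; ring

lemma continuous_em_left (x : ℝ) : Continuous fun t => em t x := by
  unfold em
  exact Complex.continuous_exp.comp (by fun_prop)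

lemma gaussC_eq (y : ℝ) :
    Complex.exp (-(π:ℂ)*(y:ℂ)^2) = ((Real.exp (-(π*y^2)) : ℝ) : ℂ) := by
  rw [Complex.ofReal_exp]; congr 1; push_cast; ring

lemma norm_gaussC_le_one (y : ℝ) : ‖Complex.exp (-(π:ℂ)*(y:ℂ)^2)‖ ≤ 1 := by
  rw [gaussC_eq, Complex.norm_real, Real.norm_eq_abs, abs_of_pos (Real.exp_pos _)]
  rw [Real.exp_le_one_iff]
  have : 0 ≤ π * y^2 := mul_nonneg Real.pi_pos.le (sq_nonneg y)
  linarith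

lemma integrable_gaussC (x : ℝ) :
    Integrable (fun t : ℝ => Complex.exp (-(π:ℂ)*((t:ℂ)-(x:ℂ))^2)) := by
  have heq : (fun t : ℝ => Complex.exp (-(π:ℂ)*((t:ℂ)-(x:ℂ))^2))
      = fun t : ℝ => Complex.exp (-(π:ℂ)*(t:ℂ)^2 + (2*(π:ℂ)*(x:ℂ))*(t:ℂ) + (-(π:ℂ)*(x:ℂ)^2)) := by
    funext t; congr 1; push_cast; ring
  rw [heq]
  exact integrable_cexp_quadratic (by simp [Real.pi_pos]) _ _

/-- Fourier transform of the shifted Gaussian. -/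
lemma gauss_ft (x ξ : ℝ) :
    ∫ t : ℝ, Complex.exp (-(π:ℂ)*((t:ℂ)-(x:ℂ))^2) * em t ξ
      = em x ξ * Complex.exp (-(π:ℂ)*(ξ:ℂ)^2) := by
  have h1 : (𝓕 fun u : ℝ => Complex.exp (-(π:ℂ) * (u:ℂ)^2)) ξ
      = Complex.exp (-(π:ℂ)*(ξ:ℂ)^2) := by
    have := congrFun (fourier_gaussian_pi (b := 1) (by norm_num)) ξ
    simpa using this
  have h2 : ∫ u : ℝ, Complex.exp (-(π:ℂ)*(u:ℂ)^2) * em u ξ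
      = Complex.exp (-(π:ℂ)*(ξ:ℂ)^2) := by
    rw [← h1, Real.fourier_real_eq_integral_exp_smul]
    congr 1; funext u
    rw [smul_eq_mul, mul_comm, em_eq_exp_mul_I]
  have h3 := integral_add_right_eq_self (μ := volume)
    (fun t : ℝ => Complex.exp (-(π:ℂ)*((t:ℂ)-(x:ℂ))^2) * em t ξ) x
  rw [← h3]
  have h4 : ∀ u : ℝ, Complex.exp (-(π:ℂ)*(((u+x:ℝ):ℂ)-(x:ℂ))^2) * em (u + x) ξ
      = (Complex.exp (-(π:ℂ)*(u:ℂ)^2) * em u ξ) * em x ξ := by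
    intro u
    rw [em_add_left]
    have : (((u+x:ℝ):ℂ)-(x:ℂ))^2 = (u:ℂ)^2 := by push_cast; ring
    rw [this]; ring
  simp_rw [h4]
  rw [integral_mul_const, h2, mul_comm]


/-- Young's convolution inequality (finiteness form): if `A, K ∈ L^r` with `1 ≤ r ≤ 2`
and `1/qr = 2/r - 1`, then the convolution is in `L^qr`. -/
lemma young {r qr : ℝ} (hr1 : 1 ≤ r) (hr2 : r ≤ 2) (hqr : 0 < qr) (hrq : 1/qr = 2/r - 1)
    {A K : ℝ → ℂ} (hA : StronglyMeasurable A) (hK : StronglyMeasurable K)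
    (hNa : (∫⁻ s : ℝ, (‖A s‖₊ : ℝ≥0∞) ^ r) < ⊤)
    (hNk : (∫⁻ s : ℝ, (‖K s‖₊ : ℝ≥0∞) ^ r) < ⊤) :
    (∫⁻ v : ℝ, (‖∫ s : ℝ, A s * K (v - s)‖₊ : ℝ≥0∞) ^ qr) < ⊤ := by
  have hr0 : (0:ℝ) < r := lt_of_lt_of_le one_pos hr1
  set a : ℝ → ℝ≥0∞ := fun s => (‖A s‖₊ : ℝ≥0∞) with ha_def
  set k : ℝ → ℝ≥0∞ := fun s => (‖K s‖₊ : ℝ≥0∞) with hk_def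
  have hameas : Measurable a := hA.measurable.enorm
  have hkmeas : Measurable k := hK.measurable.enorm
  set Na := ∫⁻ s : ℝ, a s ^ r with hNa_def
  set Nk := ∫⁻ s : ℝ, k s ^ r with hNk_def
  set e1 : ℝ := 2/r - 1 with he1_def
  set e2 : ℝ := 1 - 1/r with he2_def
  have he1 : 0 ≤ e1 := by
    have : (1:ℝ) ≤ 2/r := (one_le_div hr0).2 hr2
    simp only [he1_def]; linarith
  have he2 : 0 ≤ e2 := by
    have : 1/r ≤ 1 := by rw [div_le_one hr0]; exact hr1
    simp only [he2_def]; linarith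
  have hre : r * e1 + r * e2 = 1 := by
    simp only [he1_def, he2_def]; field_simp; ring
  -- translation invariance facts
  have htrans : ∀ v : ℝ, (∫⁻ s : ℝ, k (v - s) ^ r) = Nk := by
    intro v
    exact (Measure.measurePreserving_sub_left volume v).lintegral_comp
      (hkmeas.pow_const r)
  have htrans' : ∀ s : ℝ, (∫⁻ v : ℝ, k (v - s) ^ r) = Nk := by
    intro s
    have := (measurePreserving_add_right volume (-s)).lintegral_comp
      (f := fun u => k u ^ r) (hkmeas.pow_const r)
    simpa [sub_eq_add_neg] using this
  -- pointwise algebraic identity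
  have key : ∀ x y : ℝ≥0∞,
      x * y = (x^r * y^r)^e1 * (x^r)^e2 * (y^r)^e2 := by
    intro x y
    rw [ENNReal.mul_rpow_of_nonneg _ _ he1, ← ENNReal.rpow_mul, ← ENNReal.rpow_mul,
      ← ENNReal.rpow_mul, ← ENNReal.rpow_mul]
    have hx : x ^ (r * e1 + r * e2) = x ^ (r*e1) * x ^ (r*e2) :=
      ENNReal.rpow_add_of_nonneg _ _ (mul_nonneg hr0.le he1) (mul_nonneg hr0.le he2)
    have hy : y ^ (r * e1 + r * e2) = y ^ (r*e1) * y ^ (r*e2) :=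
      ENNReal.rpow_add_of_nonneg _ _ (mul_nonneg hr0.le he1) (mul_nonneg hr0.le he2)
    calc x * y = x ^ (r * e1 + r * e2) * y ^ (r * e1 + r * e2) := by
          rw [hre, ENNReal.rpow_one, ENNReal.rpow_one]
      _ = _ := by rw [hx, hy]; ring
  -- pointwise Hölder bound
  have hpoint : ∀ v : ℝ, (∫⁻ s : ℝ, a s * k (v - s))
      ≤ (∫⁻ s : ℝ, a s ^ r * k (v - s) ^ r) ^ e1 * Na ^ e2 * Nk ^ e2 := by
    intro v
    have hmeas : ∀ i ∈ (Finset.univ : Finset (Fin 3)),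
        AEMeasurable ((![fun s : ℝ => a s ^ r * k (v - s) ^ r,
          fun s => a s ^ r, fun s => k (v - s) ^ r] : Fin 3 → ℝ → ℝ≥0∞) i) volume := by
      intro i _
      fin_cases i
      · exact ((hameas.pow_const r).mul
          ((hkmeas.comp (measurable_const.sub measurable_id)).pow_const r)).aemeasurable
      · exact (hameas.pow_const r).aemeasurable
      · exact ((hkmeas.comp (measurable_const.sub measurable_id)).pow_const r).aemeasurable
    have hsum : ∑ i : Fin 3, (![e1, e2, e2] : Fin 3 → ℝ) i = 1 := by
      simp only [Fin.sum_univ_three, Matrix.cons_val_zero, Matrix.cons_val_one,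
        Matrix.head_cons, Matrix.cons_val_two, Matrix.tail_cons, he1_def, he2_def]
      field_simp
      ring
    have hnn : ∀ i ∈ (Finset.univ : Finset (Fin 3)), 0 ≤ (![e1, e2, e2] : Fin 3 → ℝ) i := by
      intro i _
      fin_cases i
      · exact he1
      · exact he2
      · exact he2
    have h := ENNReal.lintegral_prod_norm_pow_le (μ := volume) Finset.univ hmeas hsum hnn
    simp only [Fin.prod_univ_three, Matrix.cons_val_zero, Matrix.cons_val_one,
      Matrix.head_cons, Matrix.cons_val_two, Matrix.tail_cons] at h
    calc (∫⁻ s : ℝ, a s * k (v - s))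
        = ∫⁻ s : ℝ, (a s ^ r * k (v - s) ^ r) ^ e1 * (a s ^ r) ^ e2 * (k (v - s) ^ r) ^ e2 := by
          simp_rw [← key]
      _ ≤ (∫⁻ s : ℝ, a s ^ r * k (v - s) ^ r) ^ e1 * (∫⁻ s : ℝ, a s ^ r) ^ e2
            * (∫⁻ s : ℝ, k (v - s) ^ r) ^ e2 := h
      _ = _ := by rw [htrans v]
  -- from pointwise bound to the q-norm bound
  have he1q : e1 * qr = 1 := by
    rw [← hrq]; field_simp
  set D := Na ^ e2 * Nk ^ e2 with hD_def
  have hDne : D ^ qr ≠ ⊤ := by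
    have h1 : Na ^ e2 ≠ ⊤ := (ENNReal.rpow_lt_top_of_nonneg he2 hNa.ne).ne
    have h2 : Nk ^ e2 ≠ ⊤ := (ENNReal.rpow_lt_top_of_nonneg he2 hNk.ne).ne
    exact (ENNReal.rpow_lt_top_of_nonneg hqr.le
      (ENNReal.mul_lt_top h1.lt_top h2.lt_top).ne).ne
  have hmain : ∀ v : ℝ, (‖∫ s : ℝ, A s * K (v - s)‖₊ : ℝ≥0∞) ^ qr
      ≤ (∫⁻ s : ℝ, a s ^ r * k (v - s) ^ r) * D ^ qr := by
    intro v
    have h0 : (‖∫ s : ℝ, A s * K (v - s)‖₊ : ℝ≥0∞) ≤ ∫⁻ s : ℝ, a s * k (v - s) := by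
      refine le_trans (enorm_integral_le_lintegral_enorm _) (le_of_eq ?_)
      simp [ha_def, hk_def, nnnorm_mul, ENNReal.coe_mul, enorm_mul]; rfl
    have h1 : (‖∫ s : ℝ, A s * K (v - s)‖₊ : ℝ≥0∞)
        ≤ (∫⁻ s : ℝ, a s ^ r * k (v - s) ^ r) ^ e1 * D := by
      refine le_trans h0 (le_trans (hpoint v) (le_of_eq ?_))
      rw [hD_def]; ring
    calc (‖∫ s : ℝ, A s * K (v - s)‖₊ : ℝ≥0∞) ^ qr
        ≤ ((∫⁻ s : ℝ, a s ^ r * k (v - s) ^ r) ^ e1 * D) ^ qr :=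
          ENNReal.rpow_le_rpow h1 hqr.le
      _ = ((∫⁻ s : ℝ, a s ^ r * k (v - s) ^ r) ^ e1) ^ qr * D ^ qr :=
          ENNReal.mul_rpow_of_nonneg _ _ hqr.le
      _ = (∫⁻ s : ℝ, a s ^ r * k (v - s) ^ r) * D ^ qr := by
          rw [← ENNReal.rpow_mul, he1q, ENNReal.rpow_one]
  have hswap : (∫⁻ v : ℝ, ∫⁻ s : ℝ, a s ^ r * k (v - s) ^ r)
      = Na * Nk := by
    rw [lintegral_lintegral_swap]
    · have : ∀ s : ℝ, (∫⁻ v : ℝ, a s ^ r * k (v - s) ^ r) = a s ^ r * Nk := by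
        intro s
        rw [lintegral_const_mul' _ _ (ENNReal.rpow_lt_top_of_nonneg hr0.le
          ENNReal.coe_ne_top).ne, htrans' s]
      simp_rw [this]
      rw [lintegral_mul_const' _ _ hNk.ne]
    · exact (((hameas.comp measurable_snd).pow_const r).mul
        ((hkmeas.comp (measurable_fst.sub measurable_snd)).pow_const r)).aemeasurable
  calc (∫⁻ v : ℝ, (‖∫ s : ℝ, A s * K (v - s)‖₊ : ℝ≥0∞) ^ qr)
      ≤ ∫⁻ v : ℝ, (∫⁻ s : ℝ, a s ^ r * k (v - s) ^ r) * D ^ qr := lintegral_mono hmain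
    _ = (∫⁻ v : ℝ, ∫⁻ s : ℝ, a s ^ r * k (v - s) ^ r) * D ^ qr :=
        lintegral_mul_const' _ _ hDne
    _ = Na * Nk * D ^ qr := by rw [hswap]
    _ < ⊤ := ENNReal.mul_lt_top (ENNReal.mul_lt_top hNa hNk) hDne.lt_top

/-- Cauchy–Schwarz bound for the convolution (the `q = ∞` case). -/
lemma conv_bound {A K : ℝ → ℂ} (hA : StronglyMeasurable A) (hK : StronglyMeasurable K)
    (v : ℝ) :
    (‖∫ s : ℝ, A s * K (v - s)‖₊ : ℝ≥0∞)
      ≤ (∫⁻ s : ℝ, (‖A s‖₊ : ℝ≥0∞) ^ (2:ℝ)) ^ (1/(2:ℝ))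
        * (∫⁻ s : ℝ, (‖K s‖₊ : ℝ≥0∞) ^ (2:ℝ)) ^ (1/(2:ℝ)) := by
  have hameas : Measurable fun s : ℝ => (‖A s‖₊ : ℝ≥0∞) := hA.measurable.enorm
  have hkv : Measurable fun s : ℝ => (‖K (v - s)‖₊ : ℝ≥0∞) :=
    (hK.measurable.comp (measurable_const.sub measurable_id)).enorm
  have h0 : (‖∫ s : ℝ, A s * K (v - s)‖₊ : ℝ≥0∞)
      ≤ ∫⁻ s : ℝ, (‖A s‖₊ : ℝ≥0∞) * (‖K (v - s)‖₊ : ℝ≥0∞) := by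
    refine le_trans (enorm_integral_le_lintegral_enorm _) (le_of_eq ?_)
    simp [nnnorm_mul, ENNReal.coe_mul, enorm_mul]; rfl
  have h1 := ENNReal.lintegral_mul_le_Lp_mul_Lq volume
    Real.HolderConjugate.two_two hameas.aemeasurable hkv.aemeasurable
  have htrans : (∫⁻ s : ℝ, (‖K (v - s)‖₊ : ℝ≥0∞) ^ (2:ℝ))
      = ∫⁻ s : ℝ, (‖K s‖₊ : ℝ≥0∞) ^ (2:ℝ) :=
    (Measure.measurePreserving_sub_left volume v).lintegral_comp
      (hK.measurable.enorm.pow_const _)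
  have h2 : (∫⁻ s : ℝ, (‖A s‖₊ : ℝ≥0∞) * (‖K (v - s)‖₊ : ℝ≥0∞))
      ≤ (∫⁻ s : ℝ, (‖A s‖₊ : ℝ≥0∞) ^ (2:ℝ)) ^ (1/(2:ℝ))
        * (∫⁻ s : ℝ, (‖K (v - s)‖₊ : ℝ≥0∞) ^ (2:ℝ)) ^ (1/(2:ℝ)) := by
    simpa [Pi.mul_apply] using h1
  rw [htrans] at h2
  exact h0.trans h2


/-- Product of two Fourier integrals is the Fourier integral of the convolution. -/
lemma mul_fourier {A K : ℝ → ℂ} (hA : Integrable A volume) (hK : Integrable K volume)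
    (x : ℝ) :
    (∫ s : ℝ, A s * em s x) * (∫ s : ℝ, K s * em s x)
      = ∫ v : ℝ, (∫ s : ℝ, A s * K (v - s)) * em v x := by
  have hW0 : Integrable (fun p : ℝ × ℝ => A p.2 * K (p.1 - p.2)) (volume.prod volume) := by
    have := hA.convolution_integrand (ContinuousLinearMap.mul ℝ ℂ) hK
    simpa using this
  have hWm : AEStronglyMeasurable (fun p : ℝ × ℝ => A p.2 * K (p.1 - p.2) * em p.1 x)
      (volume.prod volume) :=
    hW0.aestronglyMeasurable.mul
      (((continuous_em_left x).comp continuous_fst).aestronglyMeasurable)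
  have hW : Integrable (fun p : ℝ × ℝ => A p.2 * K (p.1 - p.2) * em p.1 x)
      (volume.prod volume) := by
    refine hW0.norm.mono' hWm (Filter.Eventually.of_forall fun p => ?_)
    rw [norm_mul, norm_em, mul_one]
  have inner : ∀ s : ℝ, (∫ v : ℝ, A s * K (v - s) * em v x)
      = (A s * em s x) * ∫ u : ℝ, K u * em u x := by
    intro s
    rw [← integral_add_right_eq_self (μ := volume) (fun v : ℝ => A s * K (v - s) * em v x) s]
    have : ∀ u : ℝ, A s * K (u + s - s) * em (u + s) x
        = (A s * em s x) * (K u * em u x) := by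
      intro u; rw [add_sub_cancel_right, em_add_left]; ring
    simp_rw [this]
    rw [integral_const_mul]
  calc (∫ s : ℝ, A s * em s x) * (∫ s : ℝ, K s * em s x)
      = ∫ s : ℝ, (A s * em s x) * ∫ u : ℝ, K u * em u x := (integral_mul_const _ _).symm
    _ = ∫ s : ℝ, ∫ v : ℝ, A s * K (v - s) * em v x := by
        congr 1; funext s; rw [inner s]
    _ = ∫ v : ℝ, ∫ s : ℝ, A s * K (v - s) * em v x :=
        (integral_integral_swap (f := fun v s => A s * K (v - s) * em v x) hW).symm
    _ = ∫ v : ℝ, (∫ s : ℝ, A s * K (v - s)) * em v x := by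
        congr 1; funext v; rw [integral_mul_const]

end Stmt9Aux

end

open scoped ENNReal ComplexConjugate FourierTransform

open Stmt9Aux in
theorem stmt9 (p q : ENNReal) (hp : 1 ≤ p) (hq : 1 + 1/q = 2/p)
    (B : ℝ) (hB : 0 < B) (ω : ℝ) (f : ℝ → ℂ) (hf : PW B p f) :
    PW (2*B) q (fun x : ℝ => ((‖gabor f x ω‖ : ℝ) : ℂ)^2) := by
  classical
  -- exponent bookkeeping
  have hp0 : p ≠ 0 := (lt_of_lt_of_le zero_lt_one hp).ne'
  have hptop : p ≠ ⊤ := by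
    intro h
    rw [h, ENNReal.div_top] at hq
    exact absurd hq (by simp)
  have h2p1 : 1 ≤ 2/p := hq ▸ self_le_add_right 1 (1/q)
  have hple2 : p ≤ 2 := by
    have h1 : p * 1 ≤ p * (2/p) := mul_le_mul_right h2p1 p
    rwa [mul_one, ENNReal.mul_div_cancel hp0 hptop] at h1
  set r : ℝ := p.toReal with hr_def
  have hr1 : (1:ℝ) ≤ r := by
    rw [hr_def, ← ENNReal.toReal_one]
    exact ENNReal.toReal_mono hptop hp
  have hr2 : r ≤ 2 := by
    have := ENNReal.toReal_mono (by norm_num : (2:ℝ≥0∞) ≠ ⊤) hple2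
    simpa using this
  have hr0 : (0:ℝ) < r := lt_of_lt_of_le one_pos hr1
  -- a strongly measurable witness
  obtain ⟨F₀, hmem₀, hsupp₀, heq₀⟩ := hf
  have hSmeas : MeasurableSet (Set.Icc (-B) B) := measurableSet_Icc
  obtain ⟨F₁, hF₁sm, hF₁ae⟩ := hmem₀.1
  set F : ℝ → ℂ := (Set.Icc (-B) B).indicator F₁ with hF_def
  have hFsm : StronglyMeasurable F := hF₁sm.indicator hSmeas
  have hFae : F =ᵐ[volume] F₀ := by
    have h1 : ∀ᵐ x ∂volume, x ∈ Set.Icc (-B) B → F₀ x = F₁ x :=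
      (ae_restrict_iff' hSmeas).1 hF₁ae
    filter_upwards [h1] with t ht
    by_cases hts : t ∈ Set.Icc (-B) B
    · rw [hF_def]; simp only [Set.indicator_of_mem hts]; rw [ht hts]
    · rw [hF_def]; simp only [Set.indicator_of_notMem hts]; rw [hsupp₀ t hts]
  have hFres : F₀ =ᵐ[volume.restrict (Set.Icc (-B) B)] F := ae_restrict_of_ae hFae.symm
  have hFmem : MemLp F p (volume.restrict (Set.Icc (-B) B)) := hmem₀.ae_eq hFres
  have hFsupp : ∀ t ∉ Set.Icc (-B) B, F t = 0 := fun t ht => Set.indicator_of_notMem ht _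
  have hFeq : ∀ x : ℝ, f x = ∫ t : ℝ, F t * em t x := by
    intro x
    rw [heq₀ x]
    refine integral_congr_ae ?_
    filter_upwards [hFae] with t ht
    rw [Stmt9Aux.em, ht]
  -- integrability of F
  haveI : IsFiniteMeasure (volume.restrict (Set.Icc (-B) B)) :=
    ⟨by rw [Measure.restrict_apply_univ]; exact measure_Icc_lt_top⟩
  have hFint1 : Integrable F (volume.restrict (Set.Icc (-B) B)) :=
    memLp_one_iff_integrable.1 (hFmem.mono_exponent hp)
  have hFint : Integrable F volume := by
    rw [hF_def, integrable_indicator_iff hSmeas]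
    refine hFint1.congr ((ae_restrict_iff' hSmeas).2 (Filter.Eventually.of_forall
      fun t hts => ?_))
    rw [hF_def]; simp only [Set.indicator_of_mem hts]
  -- the windowed functions
  set c : ℝ := (2:ℝ)^((1:ℝ)/4) with hc_def
  have hc : 0 < c := Real.rpow_pos_of_pos (by norm_num) _
  set A : ℝ → ℂ := fun s => (c:ℂ) * F s * Complex.exp (-(π:ℂ)*((s + ω : ℝ):ℂ)^2) with hA_def
  have hGcont : Continuous fun s : ℝ => Complex.exp (-(π:ℂ)*((s + ω : ℝ):ℂ)^2) :=
    Complex.continuous_exp.comp (by fun_prop)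
  have hAsm : StronglyMeasurable A :=
    (stronglyMeasurable_const.mul hFsm).mul hGcont.stronglyMeasurable
  have hAsupp : ∀ s ∉ Set.Icc (-B) B, A s = 0 := by
    intro s hs; rw [hA_def]; simp [hFsupp s hs]
  have hAint : Integrable A volume := by
    have h1 : Integrable (fun s : ℝ => (c:ℂ) * F s) volume := hFint.const_mul _
    have h2 := h1.bdd_mul hGcont.aestronglyMeasurable
      (c := 1) (Filter.Eventually.of_forall fun s => norm_gaussC_le_one (s + ω))
    exact h2.congr (Filter.Eventually.of_forall fun s => by rw [hA_def]; ring)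
  set K : ℝ → ℂ := fun s => (starRingEnd ℂ) (A (-s)) with hK_def
  have hKsm : StronglyMeasurable K :=
    Complex.continuous_conj.comp_stronglyMeasurable (hAsm.comp_measurable measurable_neg)
  have hKsupp : ∀ s ∉ Set.Icc (-B) B, K s = 0 := by
    intro s hs
    have hns : -s ∉ Set.Icc (-B) B := by
      intro h
      rw [Set.mem_Icc] at h
      exact hs (Set.mem_Icc.2 ⟨by linarith [h.2], by linarith [h.1]⟩)
    rw [hK_def]; simp only [hAsupp _ hns, map_zero]
  have hKint : Integrable K volume := by
    refine ⟨hKsm.aestronglyMeasurable, ?_⟩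
    have h2 : (∫⁻ s : ℝ, (‖K s‖₊ : ℝ≥0∞)) = ∫⁻ s : ℝ, (‖A s‖₊ : ℝ≥0∞) := by
      calc (∫⁻ s : ℝ, (‖K s‖₊ : ℝ≥0∞)) = ∫⁻ s : ℝ, (‖A (-s)‖₊ : ℝ≥0∞) := by
            refine lintegral_congr fun s => ?_
            rw [hK_def]; simp
        _ = ∫⁻ s : ℝ, (‖A s‖₊ : ℝ≥0∞) :=
            (Measure.measurePreserving_neg volume).lintegral_comp hAsm.measurable.enorm
    show (∫⁻ s : ℝ, (‖K s‖₊ : ℝ≥0∞)) < ⊤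
    rw [h2]
    exact hAint.2
  set H : ℝ → ℂ := fun v => ∫ s : ℝ, A s * K (v - s) with hH_def
  -- the key Gabor transform formula
  have hGabor : ∀ x : ℝ, gabor f x ω = em x ω * ∫ s : ℝ, A s * em s x := by
    intro x
    rw [gabor]
    have h0 : ∀ t : ℝ, f t * Complex.exp (-(π:ℂ)*((t:ℂ)-(x:ℂ))^2)
          * Complex.exp (-2*(π:ℂ)*Complex.I*(t:ℂ)*(ω:ℂ))
        = ∫ s : ℝ, F s * em s t * Complex.exp (-(π:ℂ)*((t:ℂ)-(x:ℂ))^2) * em t ω := by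
      intro t
      rw [hFeq t, show Complex.exp (-2*(π:ℂ)*Complex.I*(t:ℂ)*(ω:ℂ)) = em t ω from rfl,
        integral_mul_const, integral_mul_const]
    simp_rw [h0]
    have hprod : Integrable (Function.uncurry fun (t s : ℝ) =>
        F s * em s t * Complex.exp (-(π:ℂ)*((t:ℂ)-(x:ℂ))^2) * em t ω)
        (volume.prod volume) := by
      have hbound : Integrable (fun p : ℝ × ℝ =>
          ‖Complex.exp (-(π:ℂ)*((p.1:ℂ)-(x:ℂ))^2)‖ * ‖F p.2‖) (volume.prod volume) :=
        (integrable_gaussC x).norm.mul_prod hFint.norm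
      have hmeas : AEStronglyMeasurable (Function.uncurry fun (t s : ℝ) =>
          F s * em s t * Complex.exp (-(π:ℂ)*((t:ℂ)-(x:ℂ))^2) * em t ω)
          (volume.prod volume) := by
        have c1 : Continuous fun p : ℝ × ℝ => em p.2 p.1 :=
          Complex.continuous_exp.comp (by fun_prop)
        have c2 : Continuous fun p : ℝ × ℝ => Complex.exp (-(π:ℂ)*((p.1:ℂ)-(x:ℂ))^2) :=
          Complex.continuous_exp.comp (by fun_prop)
        have c3 : Continuous fun p : ℝ × ℝ => em p.1 ω :=
          Complex.continuous_exp.comp (by fun_prop)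
        exact ((((hFsm.comp_measurable measurable_snd).mul
          c1.stronglyMeasurable).mul c2.stronglyMeasurable).mul
          c3.stronglyMeasurable).aestronglyMeasurable
      refine hbound.mono' hmeas (Filter.Eventually.of_forall fun p => ?_)
      show ‖F p.2 * em p.2 p.1 * _ * em p.1 ω‖ ≤ _
      rw [norm_mul, norm_mul, norm_mul, norm_em, norm_em, mul_one, mul_one, mul_comm]
    have hswap := integral_integral_swap (f := fun (t s : ℝ) =>
      F s * em s t * Complex.exp (-(π:ℂ)*((t:ℂ)-(x:ℂ))^2) * em t ω) hprod
    rw [hswap]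
    have hinner : ∀ s : ℝ, (∫ t : ℝ, F s * em s t
          * Complex.exp (-(π:ℂ)*((t:ℂ)-(x:ℂ))^2) * em t ω)
        = F s * Complex.exp (-(π:ℂ)*((s+ω : ℝ):ℂ)^2) * em s x * em x ω := by
      intro s
      have h1 : ∀ t : ℝ, F s * em s t * Complex.exp (-(π:ℂ)*((t:ℂ)-(x:ℂ))^2) * em t ω
          = F s * (Complex.exp (-(π:ℂ)*((t:ℂ)-(x:ℂ))^2) * em t (s + ω)) := by
        intro t; rw [em_add_right, em_comm s t]; ring
      simp_rw [h1]
      rw [integral_const_mul, gauss_ft x (s+ω), em_add_right, em_comm x s]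
      ring
    simp_rw [hinner]
    have h2 : ∀ s : ℝ, A s * em s x
        = (c:ℂ) * (F s * Complex.exp (-(π:ℂ)*((s+ω : ℝ):ℂ)^2) * em s x) := by
      intro s; rw [hA_def]; ring
    rw [integral_mul_const]
    simp_rw [h2]
    rw [integral_const_mul]
    ring
  -- conjugate of the Fourier integral
  have hIa_conj : ∀ x : ℝ, (starRingEnd ℂ) (∫ s : ℝ, A s * em s x)
      = ∫ s : ℝ, K s * em s x := by
    intro x
    rw [← integral_conj]
    calc (∫ s : ℝ, (starRingEnd ℂ) (A s * em s x))
        = ∫ s : ℝ, (fun u : ℝ => K u * em u x) (-s) := by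
          refine integral_congr_ae (Filter.Eventually.of_forall fun s => ?_)
          simp only [map_mul, conj_em, hK_def, neg_neg]
      _ = ∫ s : ℝ, K s * em s x := by
          simpa using integral_neg_eq_self (fun u : ℝ => K u * em u x) volume
  -- the squared modulus as a Fourier integral
  have hSq : ∀ x : ℝ, ((‖gabor f x ω‖ : ℝ) : ℂ)^2 = ∫ v : ℝ, H v * em v x := by
    intro x
    have h1 : ((‖gabor f x ω‖ : ℝ) : ℂ)^2
        = gabor f x ω * (starRingEnd ℂ) (gabor f x ω) := by
      rw [Complex.mul_conj, Complex.normSq_eq_norm_sq]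
      push_cast
      ring
    have hunit : em x ω * (starRingEnd ℂ) (em x ω) = 1 := by
      rw [Complex.mul_conj, Complex.normSq_eq_norm_sq, norm_em]
      norm_num
    rw [h1, hGabor x, map_mul, hIa_conj x]
    calc em x ω * (∫ s : ℝ, A s * em s x)
          * ((starRingEnd ℂ) (em x ω) * ∫ s : ℝ, K s * em s x)
        = (em x ω * (starRingEnd ℂ) (em x ω))
            * ((∫ s : ℝ, A s * em s x) * ∫ s : ℝ, K s * em s x) := by ring
      _ = (∫ s : ℝ, A s * em s x) * ∫ s : ℝ, K s * em s x := by rw [hunit, one_mul]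
      _ = ∫ v : ℝ, H v * em v x := mul_fourier hAint hKint x
  -- support of H
  have hHsupp : ∀ v ∉ Set.Icc (-(2*B)) (2*B), H v = 0 := by
    intro v hv
    rw [hH_def]
    have hz : ∀ s : ℝ, A s * K (v - s) = 0 := by
      intro s
      by_cases hs : s ∈ Set.Icc (-B) B
      · have hvs : (v - s) ∉ Set.Icc (-B) B := by
          intro h
          rw [Set.mem_Icc] at h hs
          exact hv (Set.mem_Icc.2 ⟨by linarith [h.1, hs.1], by linarith [h.2, hs.2]⟩)
        rw [hKsupp _ hvs, mul_zero]
      · rw [hAsupp _ hs, zero_mul]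
    simp only [hz, integral_zero]
  -- measurability of H
  have hHsm : AEStronglyMeasurable H volume := by
    have h1 : StronglyMeasurable (fun p : ℝ × ℝ => A p.2 * K (p.1 - p.2)) :=
      (hAsm.comp_measurable measurable_snd).mul
        (hKsm.comp_measurable (measurable_fst.sub measurable_snd))
    exact h1.aestronglyMeasurable.integral_prod_right'
  -- L^r bounds
  have hNf : (∫⁻ s : ℝ, (‖F s‖₊ : ℝ≥0∞) ^ r) < ⊤ := by
    have h1 : eLpNorm F p (volume.restrict (Set.Icc (-B) B)) < ⊤ := hFmem.2
    rw [eLpNorm_eq_lintegral_rpow_enorm_toReal hp0 hptop] at h1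
    have h2 : (∫⁻ s in Set.Icc (-B) B, (‖F s‖₊ : ℝ≥0∞) ^ r) < ⊤ :=
      (ENNReal.rpow_lt_top_iff_of_pos (by positivity)).1 h1
    have h3 : ∀ s : ℝ, (‖F s‖₊ : ℝ≥0∞) ^ r
        = (Set.Icc (-B) B).indicator (fun s => (‖F s‖₊ : ℝ≥0∞) ^ r) s := by
      intro s
      by_cases hs : s ∈ Set.Icc (-B) B
      · rw [Set.indicator_of_mem hs]
      · rw [Set.indicator_of_notMem hs, hFsupp s hs]
        simp [ENNReal.zero_rpow_of_pos hr0]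
    calc (∫⁻ s : ℝ, (‖F s‖₊ : ℝ≥0∞) ^ r)
        = ∫⁻ s : ℝ, (Set.Icc (-B) B).indicator (fun s => (‖F s‖₊ : ℝ≥0∞) ^ r) s :=
          lintegral_congr h3
      _ = ∫⁻ s in Set.Icc (-B) B, (‖F s‖₊ : ℝ≥0∞) ^ r := by rw [lintegral_indicator hSmeas]
      _ < ⊤ := h2
  have hAle : ∀ s : ℝ, (‖A s‖₊ : ℝ≥0∞) ≤ ENNReal.ofReal c * (‖F s‖₊ : ℝ≥0∞) := by
    intro s
    rw [← enorm_eq_nnnorm, ← enorm_eq_nnnorm, ← ofReal_norm, ← ofReal_norm,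
      ← ENNReal.ofReal_mul hc.le]
    apply ENNReal.ofReal_le_ofReal
    rw [hA_def]
    show ‖(c:ℂ) * F s * _‖ ≤ _
    rw [norm_mul, norm_mul, Complex.norm_real, Real.norm_eq_abs, abs_of_pos hc]
    calc c * ‖F s‖ * ‖Complex.exp (-(π:ℂ)*((s+ω : ℝ):ℂ)^2)‖
        ≤ c * ‖F s‖ * 1 := by
          refine mul_le_mul_of_nonneg_left (norm_gaussC_le_one (s+ω)) ?_
          positivity
      _ = c * ‖F s‖ := mul_one _
  have hNa : (∫⁻ s : ℝ, (‖A s‖₊ : ℝ≥0∞) ^ r) < ⊤ := by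
    have hcr : (ENNReal.ofReal c) ^ r ≠ ⊤ :=
      (ENNReal.rpow_lt_top_of_nonneg hr0.le ENNReal.ofReal_ne_top).ne
    calc (∫⁻ s : ℝ, (‖A s‖₊ : ℝ≥0∞) ^ r)
        ≤ ∫⁻ s : ℝ, (ENNReal.ofReal c) ^ r * (‖F s‖₊ : ℝ≥0∞) ^ r := by
          refine lintegral_mono fun s => ?_
          rw [← ENNReal.mul_rpow_of_nonneg _ _ hr0.le]
          exact ENNReal.rpow_le_rpow (hAle s) hr0.le
      _ = (ENNReal.ofReal c) ^ r * ∫⁻ s : ℝ, (‖F s‖₊ : ℝ≥0∞) ^ r :=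
          lintegral_const_mul' _ _ hcr
      _ < ⊤ := ENNReal.mul_lt_top hcr.lt_top hNf
  have hNk : (∫⁻ s : ℝ, (‖K s‖₊ : ℝ≥0∞) ^ r) < ⊤ := by
    have h1 : (∫⁻ s : ℝ, (‖K s‖₊ : ℝ≥0∞) ^ r)
        = ∫⁻ s : ℝ, (fun u : ℝ => (‖A u‖₊ : ℝ≥0∞) ^ r) (-s) := by
      refine lintegral_congr fun s => ?_
      rw [hK_def]; simp
    rw [h1, (Measure.measurePreserving_neg volume).lintegral_comp
      (f := fun u : ℝ => (‖A u‖₊ : ℝ≥0∞) ^ r) (hAsm.measurable.enorm.pow_const r)]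
    exact hNa
  -- the Lᵠ bound on H
  have hHlp : eLpNorm H q volume < ⊤ := by
    by_cases hqtop : q = ⊤
    · subst hqtop
      have hp2 : p = 2 := by
        have h1 : (1:ℝ≥0∞) = 2/p := by simpa using hq
        have h2 : p * 1 = p * (2/p) := by rw [← h1]
        rwa [mul_one, ENNReal.mul_div_cancel hp0 hptop] at h2
      have hr2' : r = (2:ℝ) := by rw [hr_def, hp2]; norm_num
      set C : ℝ≥0∞ := (∫⁻ s : ℝ, (‖A s‖₊ : ℝ≥0∞) ^ (2:ℝ)) ^ (1/(2:ℝ))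
        * (∫⁻ s : ℝ, (‖K s‖₊ : ℝ≥0∞) ^ (2:ℝ)) ^ (1/(2:ℝ)) with hC_def
    
      have hClt : C < ⊤ := by
        rw [hC_def]
        rw [hr2'] at hNa hNk
        exact ENNReal.mul_lt_top
          (ENNReal.rpow_lt_top_of_nonneg (by norm_num) hNa.ne)
          (ENNReal.rpow_lt_top_of_nonneg (by norm_num) hNk.ne)
      have hbd : ∀ v : ℝ, (‖H v‖₊ : ℝ≥0∞) ≤ C := fun v => conv_bound hAsm hKsm v
      rw [eLpNorm_exponent_top]
      refine lt_of_le_of_lt (essSup_le_of_ae_le C (Filter.Eventually.of_forall hbd)) hClt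
    · have hq0 : q ≠ 0 := by
        intro h
        rw [h] at hq
        have h1 : (1:ℝ≥0∞) + 1/0 = ⊤ := by simp
        rw [h1] at hq
        rcases ENNReal.div_eq_top.1 hq.symm with ⟨-, hp'⟩ | ⟨h2, -⟩
        · exact hp0 hp'
        · exact (by norm_num : (2:ℝ≥0∞) ≠ ⊤) h2
      set qr : ℝ := q.toReal with hqr_def
      have hqr0 : (0:ℝ) < qr := ENNReal.toReal_pos hq0 hqtop
      have hrel : 1/qr = 2/r - 1 := by
        have hqdiv : (1:ℝ≥0∞)/q ≠ ⊤ := by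
          simp [ENNReal.div_eq_top, hq0]
        have h1 : ((1:ℝ≥0∞) + 1/q).toReal = 1 + 1/qr := by
          rw [ENNReal.toReal_add ENNReal.one_ne_top hqdiv, ENNReal.toReal_div]
          norm_num [hqr_def]
        have h2 : ((2:ℝ≥0∞)/p).toReal = 2/r := by
          rw [ENNReal.toReal_div]; norm_num [hr_def]
        have h3 := congrArg ENNReal.toReal hq
        rw [h1, h2] at h3
        linarith
      have hy := young hr1 hr2 hqr0 hrel hAsm hKsm hNa hNk
      rw [eLpNorm_eq_lintegral_rpow_enorm_toReal hq0 hqtop]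
      exact ENNReal.rpow_lt_top_of_nonneg (by positivity) hy.ne
  refine ⟨H, ⟨hHsm.restrict, lt_of_le_of_lt
    (eLpNorm_mono_measure _ Measure.restrict_le_self) hHlp⟩, hHsupp, fun x => hSq x⟩
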